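/- arXiv:2209.07724 — 2 statements merged into one kernel-verified Lean document; each statement's English description precedes it below -/
import Mathlib

section
/- For any pair (a, x) of coprime integers with 1 < a ≤ x and x = ca + r (0 < r < a), deg (a - r, r)_q = deg (a, x)_q − ⌈x/a⌉. -/
open Polynomial

/-- The `q`-integer `[c]_q = 1 + q + ⋯ + q^{c-1}` as a polynomial in `ℤ[q]`. -/
noncomputable def qInt (c : ℕ) : Polynomial ℤ := ∑ i ∈ Finset.range c, X ^ i

/-- The polynomial `(a, b)_q ∈ ℤ[q]` associated to a pair of coprime positive
integers: `(1, n)_q = (n, 1)_q = [n+1]_q`; if `a < b` then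
`(a,b)_q = (a-r, r)_q + q·(a, b-a)_q` with `r = b % a`; if `a > b` then
`(a,b)_q = (a-b, b)_q + q^⌈a/b⌉·(r, b-r)_q` with `r = a % b`.
(Values on non-coprime or zero inputs are junk.) -/
noncomputable def W : ℕ → ℕ → Polynomial ℤ
  | 1, b => qInt (b + 1)
  | a, 1 => qInt (a + 1)
  | 0, _ => 0
  | _, 0 => 0
  | a + 2, b + 2 =>
    if a < b then
      W (a + 2 - (b + 2) % (a + 2)) ((b + 2) % (a + 2)) + X * W (a + 2) (b - a)
    else
      W (a - b) (b + 2) +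
        X ^ ((a + 2 + (b + 2) - 1) / (b + 2)) *
          W ((a + 2) % (b + 2)) (b + 2 - (a + 2) % (b + 2))
  termination_by a b => a + b
  decreasing_by
  · have := Nat.mod_lt (b + 2) (show 0 < a + 2 by omega); omega
  · omega
  · omega
  · have := Nat.mod_lt (a + 2) (show 0 < b + 2 by omega); omega

/-- The sequence of digits of the negative continued fraction expansion
`x/a = [c₁, …, c_l]⁻` (each `cᵢ = ⌈·⌉` of the current fraction). By convention
`ncfDigits x 0 = []` (for `1/0 = ∞`) and `ncfDigits x 1 = [x]`. -/
def ncfDigits : ℕ → ℕ → List ℕ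
  | _, 0 => []
  | x, 1 => [x]
  | x, a + 2 =>
      (x + (a + 2) - 1) / (a + 2) ::
        ncfDigits (a + 2) ((x + (a + 2) - 1) / (a + 2) * (a + 2) - x)
  termination_by x a => a
  decreasing_by
    have := Nat.div_mul_le_self (x + (a + 2) - 1) (a + 2); omega

/-- The (coprime) numerator and denominator of the Morier-Genoud–Ovsienko
`q`-deformation of the negative continued fraction `[c₁, …, c_l]⁻`, computed by
the continuant recursion `(N, D) ↦ ([c]_q·N - q^{c-1}·D, N)`, with `(1, 0)` for
the empty list. -/
noncomputable def qCF : List ℕ → Polynomial ℤ × Polynomial ℤ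
  | [] => (1, 0)
  | c :: rest =>
      let p := qCF rest
      (qInt c * p.1 - X ^ (c - 1) * p.2, p.1)

/-- Numerator `N_q(x/a)` of the Morier-Genoud–Ovsienko `q`-rational `[x/a]_q`. -/
noncomputable def Nq (x a : ℕ) : Polynomial ℤ := (qCF (ncfDigits x a)).1

/-- Denominator `D_q(x/a)` of the Morier-Genoud–Ovsienko `q`-rational `[x/a]_q`. -/
noncomputable def Dq (x a : ℕ) : Polynomial ℤ := (qCF (ncfDigits x a)).2

/-- The normalized Jones polynomial `J_{x/a}(q) = q·N_q(x/a) + (1-q)·D_q(x/a)`. -/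
noncomputable def Jq (x a : ℕ) : Polynomial ℤ := X * Nq x a + (1 - X) * Dq x a


noncomputable def Jq' := 0

section AuxW

private lemma W_eq_one_left (b : ℕ) : W 1 b = qInt (b + 1) := by
  match b with
  | 0 => delta W W._unary; rw [WellFounded.Nat.fix_eq]
  | 1 => delta W W._unary; rw [WellFounded.Nat.fix_eq]
  | n + 2 => delta W W._unary; rw [WellFounded.Nat.fix_eq]

private lemma W_eq_one_right (a : ℕ) (ha : 0 < a) : W a 1 = qInt (a + 1) := by
  match a, ha with
  | 1, _ => exact W_eq_one_left 1
  | n + 2, _ => delta W W._unary; rw [WellFounded.Nat.fix_eq]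

private lemma W_eq_rec (a b : ℕ) :
    W (a + 2) (b + 2) =
      if a < b then
        W (a + 2 - (b + 2) % (a + 2)) ((b + 2) % (a + 2)) + X * W (a + 2) (b - a)
      else
        W (a - b) (b + 2) +
          X ^ ((a + 2 + (b + 2) - 1) / (b + 2)) *
            W ((a + 2) % (b + 2)) (b + 2 - (a + 2) % (b + 2)) := by
  delta W W._unary; rw [WellFounded.Nat.fix_eq]; rfl

private lemma qInt_coeff (n k : ℕ) : (qInt n).coeff k = if k < n then 1 else 0 := by
  simp [qInt, Polynomial.coeff_X_pow, Finset.sum_ite_eq, eq_comm]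

private lemma qInt_natDegree (n : ℕ) : (qInt (n + 1)).natDegree = n := by
  apply le_antisymm
  · rw [Polynomial.natDegree_le_iff_coeff_eq_zero]
    intro N hN; rw [qInt_coeff]; simp; omega
  · apply Polynomial.le_natDegree_of_ne_zero
    rw [qInt_coeff]; simp

private lemma qInt_nonneg (n k : ℕ) : 0 ≤ (qInt n).coeff k := by
  rw [qInt_coeff]; split <;> norm_num

private lemma qInt_coeff_zero (n : ℕ) : (qInt (n + 1)).coeff 0 = 1 := by
  rw [qInt_coeff]; simp

private lemma mul_coeff_nonneg (p q : Polynomial ℤ) (hp : ∀ k, 0 ≤ p.coeff k)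
    (hq : ∀ k, 0 ≤ q.coeff k) (k : ℕ) : 0 ≤ (p * q).coeff k := by
  rw [Polynomial.coeff_mul]
  exact Finset.sum_nonneg fun x _ => mul_nonneg (hp _) (hq _)

private lemma xpow_coeff_nonneg (c k : ℕ) : (0 : ℤ) ≤ (X ^ c : Polynomial ℤ).coeff k := by
  rw [Polynomial.coeff_X_pow]; split <;> norm_num

private lemma ne_zero_of_coeff_zero (p : Polynomial ℤ) (hp : p.coeff 0 = 1) : p ≠ 0 := by
  intro h; rw [h] at hp; simp at hp

private lemma natDegree_add_max (p q : Polynomial ℤ) (hp : ∀ k, 0 ≤ p.coeff k)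
    (hq : ∀ k, 0 ≤ q.coeff k) (hp0 : p ≠ 0) (hq0 : q ≠ 0) :
    (p + q).natDegree = max p.natDegree q.natDegree := by
  apply le_antisymm (Polynomial.natDegree_add_le p q)
  apply Polynomial.le_natDegree_of_ne_zero
  rw [Polynomial.coeff_add]
  rcases le_total p.natDegree q.natDegree with h | h
  · have h1 : 0 < q.coeff q.natDegree :=
      lt_of_le_of_ne (hq _) (Ne.symm (Polynomial.leadingCoeff_ne_zero.mpr hq0))
    have h2 := hp (max p.natDegree q.natDegree)
    rw [max_eq_right h] at h2 ⊢
    omega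
  · have h1 : 0 < p.coeff p.natDegree :=
      lt_of_le_of_ne (hp _) (Ne.symm (Polynomial.leadingCoeff_ne_zero.mpr hp0))
    have h2 := hq (max p.natDegree q.natDegree)
    rw [max_eq_left h] at h2 ⊢
    omega

private lemma natDegree_add_xpow (p q : Polynomial ℤ) (c : ℕ) (hp : ∀ k, 0 ≤ p.coeff k)
    (hq : ∀ k, 0 ≤ q.coeff k) (hp0 : p ≠ 0) (hq0 : q ≠ 0) :
    (p + X ^ c * q).natDegree = max p.natDegree (c + q.natDegree) := by
  have hx : (X ^ c : Polynomial ℤ) ≠ 0 := pow_ne_zero _ Polynomial.X_ne_zero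
  rw [natDegree_add_max p _ hp (mul_coeff_nonneg _ _ (xpow_coeff_nonneg c) hq)
      hp0 (mul_ne_zero hx hq0),
    Polynomial.natDegree_mul hx hq0, Polynomial.natDegree_X_pow]

end AuxW

private lemma W_lt (a b : ℕ) (ha : 2 ≤ a) (hb : 2 ≤ b) (h : a < b) :
    W a b = W (a - b % a) (b % a) + X ^ 1 * W a (b - a) := by
  obtain ⟨a', rfl⟩ : ∃ a', a = a' + 2 := ⟨a - 2, by omega⟩
  obtain ⟨b', rfl⟩ : ∃ b', b = b' + 2 := ⟨b - 2, by omega⟩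
  rw [W_eq_rec, if_pos (show a' < b' by omega), pow_one,
    show b' + 2 - (a' + 2) = b' - a' from by omega]

private lemma W_gt (a b : ℕ) (ha : 2 ≤ a) (hb : 2 ≤ b) (h : b < a) :
    W a b = W (a - b) b + X ^ ((a + b - 1) / b) * W (a % b) (b - a % b) := by
  obtain ⟨a', rfl⟩ : ∃ a', a = a' + 2 := ⟨a - 2, by omega⟩
  obtain ⟨b', rfl⟩ : ∃ b', b = b' + 2 := ⟨b - 2, by omega⟩
  rw [W_eq_rec, if_neg (show ¬ a' < b' by omega),
    show a' + 2 - (b' + 2) = a' - b' from by omega]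

private lemma W_main : ∀ (n a b : ℕ), a + b ≤ n → 0 < a → 0 < b → Nat.Coprime a b →
    (∀ k, 0 ≤ (W a b).coeff k) ∧ (W a b).coeff 0 = 1 ∧
    (a < b → (W a b).natDegree = (W a (b - a)).natDegree + 1) ∧
    (2 ≤ a → a < b → (W a b).natDegree = (W (a - b % a) (b % a)).natDegree + (b + a - 1) / a) ∧
    (b < a → (W a b).natDegree = (W (a - b) b).natDegree + 1) ∧
    (2 ≤ b → b < a → (W a b).natDegree = (W (a % b) (b - a % b)).natDegree + (a + b - 1) / b) := by
  intro n
  induction n with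
  | zero => intro a b h ha hb _; omega
  | succ n IH =>
    intro a b hab ha hb hco
    rcases Nat.lt_or_ge a 2 with ha1 | ha2
    · -- a = 1
      have h1 : a = 1 := by omega
      subst h1
      refine ⟨fun k => by rw [W_eq_one_left]; exact qInt_nonneg _ k,
        by rw [W_eq_one_left]; exact qInt_coeff_zero _, ?_, ?_, ?_, ?_⟩
      · intro h
        rw [W_eq_one_left, W_eq_one_left, qInt_natDegree, qInt_natDegree]
        omega
      · intro h; omega
      · intro h; omega
      · intro _ h; omega
    rcases Nat.lt_or_ge b 2 with hb1 | hb2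
    · -- b = 1
      have h1 : b = 1 := by omega
      subst h1
      refine ⟨fun k => by rw [W_eq_one_right a (by omega)]; exact qInt_nonneg _ k,
        by rw [W_eq_one_right a (by omega)]; exact qInt_coeff_zero _, ?_, ?_, ?_, ?_⟩
      · intro h; omega
      · intro _ h; omega
      · intro h
        rw [W_eq_one_right a (by omega), W_eq_one_right (a - 1) (by omega), qInt_natDegree, qInt_natDegree]
        omega
      · intro _ h; omega
    -- now 2 ≤ a, 2 ≤ b
    rcases lt_trichotomy a b with hlt | heq | hgt
    · -- a < b
      have hr : b % a < a := Nat.mod_lt _ (by omega)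
      have hr0 : 0 < b % a := by
        rcases Nat.eq_zero_or_pos (b % a) with h0 | h0
        · exfalso
          have hd : a ∣ b := Nat.dvd_of_mod_eq_zero h0
          have := Nat.Coprime.eq_one_of_dvd hco hd
          omega
        · exact h0
      have hcoar : Nat.Coprime a (b % a) := by
        have := Nat.gcd_rec a b
        unfold Nat.Coprime at hco ⊢
        rw [hco] at this
        rw [Nat.gcd_comm]; omega
      have hco1 : Nat.Coprime (a - b % a) (b % a) := by
        unfold Nat.Coprime at hcoar ⊢
        rw [Nat.gcd_sub_self_left (le_of_lt hr)]; exact hcoar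
      have hco2 : Nat.Coprime a (b - a) := by
        unfold Nat.Coprime at hco ⊢
        rw [Nat.gcd_sub_self_right (le_of_lt hlt)]; exact hco
      obtain ⟨hP1, hP2, -, -, -, -⟩ := IH (a - b % a) (b % a) (by omega) (by omega) hr0 hco1
      obtain ⟨hQ1, hQ2, -, hQ4, hQ5, -⟩ := IH a (b - a) (by omega) (by omega) (by omega) hco2
      have hPne := ne_zero_of_coeff_zero _ hP2
      have hQne := ne_zero_of_coeff_zero _ hQ2
      have dmax : (W a b).natDegree =
          max (W (a - b % a) (b % a)).natDegree (1 + (W a (b - a)).natDegree) := by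
        rw [W_lt a b ha2 hb2 hlt]
        exact natDegree_add_xpow _ _ 1 hP1 hQ1 hPne hQne
      have hnn : ∀ k, 0 ≤ (W a b).coeff k := by
        intro k
        rw [W_lt a b ha2 hb2 hlt, Polynomial.coeff_add]
        exact add_nonneg (hP1 k) (mul_coeff_nonneg _ _ (xpow_coeff_nonneg 1) hQ1 k)
      have hc0 : (W a b).coeff 0 = 1 := by
        rw [W_lt a b ha2 hb2 hlt, Polynomial.coeff_add, Polynomial.mul_coeff_zero, hP2,
          Polynomial.coeff_X_pow]
        norm_num
      -- compute the key degree relation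
      have key : (W a (b - a)).natDegree
          = (W (a - b % a) (b % a)).natDegree + ((b + a - 1) / a - 1) ∧ 2 ≤ (b + a - 1) / a := by
        rcases Nat.lt_or_ge (b - a) a with hsub | hsub
        · -- b - a < a, so b % a = b - a and ceil = 2
          have hmod : b % a = b - a := by
            rw [Nat.mod_eq_sub_mod (le_of_lt hlt), Nat.mod_eq_of_lt hsub]
          have hceil : (b + a - 1) / a = 2 := by
            apply Nat.div_eq_of_lt_le <;> omega
          rcases Nat.lt_or_ge 1 (b - a) with h1 | h1
          · -- b - a ≥ 2: use IH clause 5 on (a, b - a)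
            have := hQ5 (by omega)
            rw [hmod, hceil]
            constructor
            · omega
            · omega
          · -- b - a = 1
            have hba : b - a = 1 := by omega
            rw [hmod, hba, hceil]
            rw [W_eq_one_right a (by omega), W_eq_one_right (a - 1) (by omega), qInt_natDegree, qInt_natDegree]
            omega
        · -- b - a > a (equality impossible by coprimality)
          have hne : b - a ≠ a := by
            intro h
            have hd : a ∣ b := ⟨2, by omega⟩
            have := Nat.Coprime.eq_one_of_dvd hco hd
            omega
          have hmod : (b - a) % a = b % a := by
            rw [Nat.mod_eq_sub_mod (le_of_lt hlt)]
          have hceil : (b + a - 1) / a = (b - a + a - 1) / a + 1 := by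
            rw [show b + a - 1 = (b - a + a - 1) + a from by omega,
              Nat.add_div_right _ (show 0 < a by omega)]
          have hceil2 : 1 ≤ (b - a + a - 1) / a := by
            rw [Nat.one_le_div_iff (show 0 < a by omega)]; omega
          have := hQ4 ha2 (by omega)
          rw [hmod] at this
          constructor
          · omega
          · omega
      refine ⟨hnn, hc0, ?_, ?_, ?_, ?_⟩
      · intro _; rw [dmax]; omega
      · intro _ _; rw [dmax]; omega
      · intro h; omega
      · intro _ h; omega
    · exfalso
      subst heq
      rw [Nat.Coprime, Nat.gcd_self] at hco
      omega
    · -- b < a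
      have hs : a % b < b := Nat.mod_lt _ (by omega)
      have hs0 : 0 < a % b := by
        rcases Nat.eq_zero_or_pos (a % b) with h0 | h0
        · exfalso
          have hd : b ∣ a := Nat.dvd_of_mod_eq_zero h0
          have := Nat.Coprime.eq_one_of_dvd hco.symm hd
          omega
        · exact h0
      have hcobs : Nat.Coprime b (a % b) := by
        have := Nat.gcd_rec b a
        unfold Nat.Coprime at hco ⊢
        rw [Nat.gcd_comm] at hco
        rw [hco] at this
        rw [Nat.gcd_comm]; omega
      have hco1 : Nat.Coprime (a - b) b := by
        unfold Nat.Coprime at hco ⊢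
        rw [Nat.gcd_sub_self_left (le_of_lt hgt)]; exact hco
      have hco2 : Nat.Coprime (a % b) (b - a % b) := by
        unfold Nat.Coprime at hcobs ⊢
        rw [Nat.gcd_sub_self_right (le_of_lt hs)]
        rw [Nat.gcd_comm]; exact hcobs
      obtain ⟨hP1, hP2, hP3, -, -, hP4⟩ := IH (a - b) b (by omega) (by omega) hb (hco1)
      obtain ⟨hQ1, hQ2, -, -, -, -⟩ := IH (a % b) (b - a % b) (by omega) hs0 (by omega) hco2
      have hPne := ne_zero_of_coeff_zero _ hP2
      have hQne := ne_zero_of_coeff_zero _ hQ2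
      have hceil1 : 1 ≤ (a + b - 1) / b := by
        rw [Nat.one_le_div_iff (show 0 < b by omega)]; omega
      have dmax : (W a b).natDegree =
          max (W (a - b) b).natDegree
            ((a + b - 1) / b + (W (a % b) (b - a % b)).natDegree) := by
        rw [W_gt a b ha2 hb2 hgt]
        exact natDegree_add_xpow _ _ _ hP1 hQ1 hPne hQne
      have hnn : ∀ k, 0 ≤ (W a b).coeff k := by
        intro k
        rw [W_gt a b ha2 hb2 hgt, Polynomial.coeff_add]
        exact add_nonneg (hP1 k) (mul_coeff_nonneg _ _ (xpow_coeff_nonneg _) hQ1 k)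
      have hc0 : (W a b).coeff 0 = 1 := by
        rw [W_gt a b ha2 hb2 hgt, Polynomial.coeff_add, Polynomial.mul_coeff_zero, hP2,
          Polynomial.coeff_X_pow, if_neg (by omega)]
        ring
      have key : (W (a - b) b).natDegree
          = (W (a % b) (b - a % b)).natDegree + ((a + b - 1) / b - 1) ∧ 2 ≤ (a + b - 1) / b := by
        rcases Nat.lt_or_ge (a - b) b with hsub | hsub
        · -- a - b < b, so a % b = a - b and ceil = 2
          have hmod : a % b = a - b := by
            rw [Nat.mod_eq_sub_mod (le_of_lt hgt), Nat.mod_eq_of_lt hsub]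
          have hceil : (a + b - 1) / b = 2 := by
            apply Nat.div_eq_of_lt_le <;> omega
          rcases Nat.lt_or_ge 1 (a - b) with h1 | h1
          · -- a - b ≥ 2: use IH clause 3 on (a - b, b)
            have := hP3 (by omega)
            rw [hmod, hceil]
            rw [show b - (a - b) = b - a % b from by rw [hmod]] at this
            constructor
            · omega
            · omega
          · -- a - b = 1
            have hab1 : a - b = 1 := by omega
            rw [hmod, hab1, hceil]
            rw [show W 1 b = qInt (b - 1 + 1 + 1) from by rw [W_eq_one_left]; congr 1; omega,
              W_eq_one_left (b - 1), qInt_natDegree, qInt_natDegree]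
            omega
        · -- a - b > b
          have hne : a - b ≠ b := by
            intro h
            have hd : b ∣ a := ⟨2, by omega⟩
            have := Nat.Coprime.eq_one_of_dvd hco.symm hd
            omega
          have hmod : (a - b) % b = a % b := by
            rw [Nat.mod_eq_sub_mod (le_of_lt hgt)]
          have hceil : (a + b - 1) / b = (a - b + b - 1) / b + 1 := by
            rw [show a + b - 1 = (a - b + b - 1) + b from by omega,
              Nat.add_div_right _ (show 0 < b by omega)]
          have hceil2 : 1 ≤ (a - b + b - 1) / b := by
            rw [Nat.one_le_div_iff (show 0 < b by omega)]; omega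
          have := hP4 hb2 (by omega)
          rw [hmod] at this
          constructor
          · omega
          · omega
      refine ⟨hnn, hc0, ?_, ?_, ?_, ?_⟩
      · intro h; omega
      · intro _ h; omega
      · intro _; rw [dmax]; omega
      · intro _ _; rw [dmax]; omega

/-- For coprime `1 < a ≤ x` with `x = c·a + r`, `0 < r < a`:
`deg (a-r, r)_q = deg (a, x)_q − ⌈x/a⌉` (here `⌈x/a⌉ = (x + a - 1)/a`). -/
theorem W_natDegree_rem (a x c r : ℕ) (hco : Nat.Coprime a x) (ha : 1 < a) (hax : a ≤ x)
    (hx : x = c * a + r) (hr0 : 0 < r) (hr : r < a) :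
    (W (a - r) r).natDegree + (x + a - 1) / a = (W a x).natDegree := by
  have hax' : a < x := by
    rcases lt_or_eq_of_le hax with h | h
    · exact h
    · exfalso; subst h; rw [Nat.Coprime, Nat.gcd_self] at hco; omega
  have hrm : x % a = r := by
    rw [hx, Nat.mul_comm, Nat.mul_add_mod, Nat.mod_eq_of_lt hr]
  have key := (W_main (a + x) a x le_rfl (by omega) (by omega) hco).2.2.2.1 ha hax'
  rw [hrm] at key
  omega
end

section
/- Let (a, x) and (b, y) be pairs of coprime integers with 1 ≤ a ≤ x, 1 ≤ b ≤ y, and ay - bx = 1. Then (a+b, x+y)_q = (a, x)_q + q^{⌈x/y⌉} · (b, y)_q. -/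
open Polynomial

theorem qInt_one : qInt 1 = 1 := by simp [qInt]
theorem qInt_two : qInt 2 = 1 + X := by simp [qInt, Finset.sum_range_succ]
theorem qInt_succ (n : ℕ) : qInt (n+1) = qInt n + X^n := Finset.sum_range_succ _ n
theorem qInt_succ' (n : ℕ) : qInt (n+1) = 1 + X * qInt n := by
  unfold qInt
  rw [Finset.sum_range_succ', Finset.mul_sum]
  simp [pow_succ, mul_comm]
  rw [add_comm]

theorem W_one_left (b : ℕ) : W 1 b = qInt (b+1) := by
  match b with
  | 0 => delta W W._unary; rw [WellFounded.Nat.fix_eq]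
  | 1 => delta W W._unary; rw [WellFounded.Nat.fix_eq]
  | (b+2) => delta W W._unary; rw [WellFounded.Nat.fix_eq]

theorem W_one_right (a : ℕ) : W a 1 = qInt (a+1) := by
  match a with
  | 0 => delta W W._unary; rw [WellFounded.Nat.fix_eq]; rfl
  | 1 => exact W_one_left 1
  | (a+2) => delta W W._unary; rw [WellFounded.Nat.fix_eq]

theorem W_step (a b : ℕ) : W (a+2) (b+2) = if a < b then
      W (a + 2 - (b + 2) % (a + 2)) ((b + 2) % (a + 2)) + X * W (a + 2) (b - a)
    else
      W (a - b) (b + 2) +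
        X ^ ((a + 2 + (b + 2) - 1) / (b + 2)) *
          W ((a + 2) % (b + 2)) (b + 2 - (a + 2) % (b + 2)) := by
  delta W W._unary
  conv_lhs => rw [WellFounded.Nat.fix_eq]; whnf
  by_cases h : a < b
  · rw [Subsingleton.elim (Nat.decLt a b) (isTrue h), if_pos h]
  · rw [Subsingleton.elim (Nat.decLt a b) (isFalse h), if_neg h]

/-- helper: compute mod from a representation -/
theorem modRep {n M q r : ℕ} (h : n = M*q + r) (hr : r < M) : n % M = r := by
  rw [h, Nat.mul_add_mod, Nat.mod_eq_of_lt hr]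

theorem divRep {n M q r : ℕ} (h : n = M*q + r) (hr : r < M) : n / M = q := by
  rw [h, Nat.mul_add_div (by omega), Nat.div_eq_of_lt hr, Nat.add_zero]

theorem W_L1 (A B : ℕ) (hA : 1 ≤ A) (hAB : A < B) :
    W A B = W (A - B % A) (B % A) + X * W A (B - A) := by
  match A, B with
  | 0, B => omega
  | (a+2), 0 => omega
  | (a+2), 1 => omega
  | 1, B =>
    rw [Nat.mod_one, Nat.sub_zero, W_one_left, W_one_left 0, W_one_left,
      show B - 1 + 1 = B from by omega, qInt_succ' B, qInt_one]
  | (a+2), (b+2) =>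
    rw [W_step, if_pos (by omega), show b - a = (b+2) - (a+2) from by omega]

theorem W_L2 (A B : ℕ) (hB : 1 ≤ B) (hBA : B < A) :
    W A B = W (A - B) B + X ^ ((A + B - 1) / B) * W (A % B) (B - A % B) := by
  match A, B with
  | 0, B => omega
  | 1, B => omega
  | (a+2), 0 => omega
  | (a+2), 1 =>
    rw [Nat.mod_one, Nat.sub_zero, W_one_right, W_one_right, W_one_right 0,
      show a + 2 + 1 - 1 = a + 2 from by omega, Nat.div_one,
      show a + 2 - 1 + 1 = a + 2 from by omega, qInt_succ (a+2), qInt_one, mul_one]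
  | (a+2), (b+2) =>
    rw [W_step, if_neg (by omega), show a - b = (a+2) - (b+2) from by omega]

/-- key arithmetic: `x/y = (a-1)/b` whenever `a*y = b*x + 1`. -/
theorem keyD {a x b y : ℕ} (h : a*y = b*x+1) (hb : 1 ≤ b) (hy : 1 ≤ y) :
    x / y = (a-1) / b := by
  have ha : 1 ≤ a := by
    rcases a with _|n
    · rw [Nat.zero_mul] at h; omega
    · omega
  set k := (a-1)/b with hk
  have h1 : k*b ≤ a-1 := Nat.div_mul_le_self _ _
  have h2 : a - 1 < (k+1)*b := by
    have hm := Nat.div_add_mod (a-1) b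
    rw [← hk] at hm
    have hl := Nat.mod_lt (a-1) (show 0 < b by omega)
    have hbr : (k+1)*b = b*k + b := by ring
    omega
  have le : k*y ≤ x := by
    have c1 : b*(k*y) ≤ b*x := by
      calc b*(k*y) = (k*b)*y := by ring
        _ ≤ (a-1)*y := Nat.mul_le_mul_right _ h1
        _ ≤ b*x := by
            have e2 : (a-1)*y + y = a*y := by
              calc (a-1)*y + y = ((a-1)+1)*y := by ring
                _ = a*y := by rw [show a - 1 + 1 = a from by omega]
            omega
    exact Nat.le_of_mul_le_mul_left c1 (by omega)
  have lt : x < (k+1)*y := by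
    have c2 : b*x < b*((k+1)*y) := by
      have e3 : a*y ≤ ((k+1)*b)*y := Nat.mul_le_mul_right _ (by omega)
      have e4 : ((k+1)*b)*y = b*((k+1)*y) := by ring
      omega
    exact Nat.lt_of_mul_lt_mul_left c2
  exact Nat.div_eq_of_lt_le le lt


/-- In the case `a < x`, `2 ≤ b` of the main induction, the continued-fraction
digits of `x/a` and `y/b` agree: common floor with positive remainders. -/
theorem T1floor {a x b y : ℕ} (h : a*y = b*x+1) (ha : 1 ≤ a) (hb : 2 ≤ b) :
    ∃ f ra rb, a*f + ra = x ∧ b*f + rb = y ∧ ra < a ∧ rb < b ∧ 1 ≤ rb := by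
  refine ⟨x/a, x%a, y - b*(x/a), Nat.div_add_mod x a, ?_, Nat.mod_lt _ (by omega), ?_, ?_⟩
  all_goals {
    have hxe := Nat.div_add_mod x a
    have hra := Nat.mod_lt x (show 0 < a by omega)
    have e1 : a*y = b*(a*(x/a)) + (b*(x%a) + 1) := by
      calc a*y = b*x+1 := h
        _ = b*(a*(x/a) + x%a)+1 := by rw [hxe]
        _ = b*(a*(x/a)) + (b*(x%a) + 1) := by ring
    have key1 : a*(b*(x/a)) < a*y := by
      have br : a*(b*(x/a)) = b*(a*(x/a)) := by ring
      omega
    have key2 : a*y < a*(b*(x/a) + b) := by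
      have e2 : b*(x%a) + b ≤ b*a := by
        calc b*(x%a) + b = b*(x%a+1) := by ring
          _ ≤ b*a := Nat.mul_le_mul_left b (by omega)
      have br2 : a*(b*(x/a) + b) = b*(a*(x/a)) + a*b := by ring
      have br3 : a*b = b*a := by ring
      omega
    have h1 : b*(x/a) < y := Nat.lt_of_mul_lt_mul_left key1
    have h2 : y < b*(x/a) + b := Nat.lt_of_mul_lt_mul_left key2
    omega }

/-- In the case `x < a`, `2 ≤ y`: bounds for the ceiling digit. -/
theorem T2ceil {a x b y : ℕ} (h : a*y = b*x+1) (hx : 1 ≤ x) (hy : 2 ≤ y) :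
    ∃ m rb, y*m + rb = b ∧ 1 ≤ rb ∧ rb < y ∧ m*x < a ∧ a ≤ m*x + x := by
  have hm := Nat.div_add_mod b y
  have hrb := Nat.mod_lt b (show 0 < y by omega)
  refine ⟨b/y, b%y, hm, ?_, hrb, ?_, ?_⟩
  · -- 1 ≤ b % y : else y ∣ b hence y ∣ 1
    by_contra hc
    push_neg at hc
    set c := b/y with hcd
    interval_cases hby : b % y
    have hb : b = y*c := by omega
    have e1 : y*a = y*(c*x) + 1 := by
      calc y*a = a*y := by ring
        _ = b*x+1 := h
        _ = y*(c*x) + 1 := by rw [hb]; ring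
    have h2 : c*x < a := by
      have : y*(c*x) < y*a := by omega
      exact Nat.lt_of_mul_lt_mul_left this
    have e2 : y*(a - c*x) = 1 := by
      have := Nat.mul_sub y a (c*x)
      omega
    have hdvd : y ∣ 1 := ⟨a - c*x, e2.symm⟩
    have := Nat.le_of_dvd one_pos hdvd
    omega
  · -- (b/y)*x < a
    have e1 : y*a = y*((b/y)*x) + ((b%y)*x + 1) := by
      calc y*a = a*y := by ring
        _ = b*x + 1 := h
        _ = (y*(b/y) + b%y)*x + 1 := by rw [hm]
        _ = y*((b/y)*x) + ((b%y)*x + 1) := by ring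
    have key : y*((b/y)*x) < y*a := by omega
    exact Nat.lt_of_mul_lt_mul_left key
  · -- a ≤ (b/y)*x + x
    have e1 : y*a = y*((b/y)*x) + ((b%y)*x + 1) := by
      calc y*a = a*y := by ring
        _ = b*x + 1 := h
        _ = (y*(b/y) + b%y)*x + 1 := by rw [hm]
        _ = y*((b/y)*x) + ((b%y)*x + 1) := by ring
    have e2 : (b%y)*x + x ≤ y*x := by
      calc (b%y)*x + x = (b%y+1)*x := by ring
        _ ≤ y*x := Nat.mul_le_mul_right x (by omega)
    have key : y*a ≤ y*((b/y)*x + x) := by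
      have br : y*((b/y)*x + x) = y*((b/y)*x) + y*x := by ring
      omega
    exact Nat.le_of_mul_le_mul_left key (by omega)

theorem sub_one_div {x y : ℕ} (hx : 1 ≤ x % y) : (x-1)/y = x/y := by
  rcases Nat.eq_zero_or_pos y with h0|h0
  · rw [h0, Nat.div_zero, Nat.div_zero]
  · have hm := Nat.div_add_mod x y
    have hl := Nat.mod_lt x h0
    exact divRep (by omega : x - 1 = y*(x/y) + (x%y - 1)) (by omega)

/-- if `a*y = b*x + 1` and `2 ≤ y` then `y ∤ x`, in remainder form. -/
theorem ymodx {a x b y : ℕ} (h : a*y = b*x+1) (hy : 2 ≤ y) : 1 ≤ x % y := by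
  by_contra hc
  push_neg at hc
  have hm := Nat.div_add_mod x y
  set c := x/y with hcd
  interval_cases hxy : x % y
  have hx : x = y*c := by omega
  have e1 : y*a = y*(b*c) + 1 := by
    calc y*a = a*y := by ring
      _ = b*x+1 := h
      _ = y*(b*c) + 1 := by rw [hx]; ring
  have h2 : b*c < a := Nat.lt_of_mul_lt_mul_left (show y*(b*c) < y*a by omega)
  have e2 : y*(a - b*c) = 1 := by
    have := Nat.mul_sub y a (b*c)
    omega
  have hdvd : y ∣ 1 := ⟨a - b*c, e2.symm⟩
  have := Nat.le_of_dvd one_pos hdvd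
  omega

theorem Gaux : ∀ N a x b y : ℕ, a+x+b+y ≤ N → a*y = b*x+1 →
    W (a+b) (x+y) = W a x + X^((x+y)/y) * W b y := by
  intro N
  induction N with
  | zero =>
    intro a x b y hN h
    have ha : 1 ≤ a := by
      rcases a with _|n
      · rw [Nat.zero_mul] at h; omega
      · omega
    omega
  | succ N IH =>
    intro a x b y hN h
    have ha : 1 ≤ a := by
      rcases a with _|n
      · rw [Nat.zero_mul] at h; omega
      · omega
    have hy : 1 ≤ y := by
      rcases y with _|n
      · rw [Nat.mul_zero] at h; omega
      · omega
    by_cases hx0 : x = 0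
    · -- degenerate: x = 0 forces a = y = 1
      subst hx0
      rw [Nat.mul_zero, Nat.zero_add] at h
      have ha1 : a = 1 := by
        have := Nat.le_of_dvd one_pos ⟨y, h.symm⟩; omega
      have hy1 : y = 1 := by
        have := Nat.le_of_dvd one_pos ⟨a, by rw [mul_comm] at h; exact h.symm⟩; omega
      subst ha1; subst hy1
      rw [show (0:ℕ)+1 = 1 from rfl, Nat.div_one, W_one_right (1+b), W_one_left 0,
        W_one_right b, show 1+b+1 = (b+1)+1 from by omega, qInt_succ' (b+1),
        show (0:ℕ)+1 = 1 from rfl, qInt_one]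
      ring
    by_cases hb0 : b = 0
    · -- degenerate: b = 0 forces a = y = 1
      subst hb0
      rw [Nat.zero_mul, Nat.zero_add] at h
      have ha1 : a = 1 := by
        have := Nat.le_of_dvd one_pos ⟨y, h.symm⟩; omega
      have hy1 : y = 1 := by
        have := Nat.le_of_dvd one_pos ⟨a, by rw [mul_comm] at h; exact h.symm⟩; omega
      subst ha1; subst hy1
      rw [Nat.add_zero, Nat.div_one, W_one_left (x+1), W_one_left x, W_one_right 0,
        show (0:ℕ)+1 = 1 from rfl, qInt_one, qInt_succ (x+1), qInt_succ x]
      ring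
    have hx : 1 ≤ x := by omega
    have hb : 1 ≤ b := by omega
    rcases lt_trichotomy x a with hxa | hxa | hxa
    · -- ===== x < a : right-heavy side =====
      have hyb : y ≤ b := by
        have e3 : b*(x+1) ≤ b*a := Nat.mul_le_mul_left b (by omega)
        have br : b*(x+1) = b*x + b := by ring
        have key : a*y ≤ a*b := by
          have br2 : a*b = b*a := by ring
          omega
        exact Nat.le_of_mul_le_mul_left key (by omega)
      rcases eq_or_lt_of_le hyb with hyb1 | hyb2
      · -- B2 : y = b, forces b = 1, a = x + 1
        subst hyb1
        have hay : y*x < y*a := by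
          have br : a*y = y*a := by ring
          have br2 : y*x = x*y := by ring
          have e3 : x*y < a*y := by omega
          omega
        have hzB2 : (a:ℤ)*y = y*x+1 := by exact_mod_cast h
        have e2 : y*(a-x) = 1 := by
          zify [le_of_lt hxa]; linear_combination hzB2
        have hy1 : y = 1 := by
          have := Nat.le_of_dvd one_pos ⟨a-x, e2.symm⟩; omega
        subst hy1
        have hax : a = x+1 := by
          rw [Nat.mul_one, Nat.one_mul] at h; omega
        subst hax
        have e1 : (x+1+1) % (x+1) = 1 := modRep (by omega : x+1+1 = (x+1)*1 + 1) (by omega)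
        have hg : (x+1+1+(x+1)-1)/(x+1) = 2 := divRep (by omega : x+1+1+(x+1)-1 = (x+1)*2 + 0) (by omega)
        have hg2 : ((x+1)+x-1)/x = 2 := divRep (by omega : (x+1)+x-1 = x*2 + 0) (by omega)
        have hSL2 : W ((x+1)%x) (x - (x+1)%x) = qInt x := by
          by_cases hx1 : x = 1
          · subst hx1; norm_num
            rw [W_one_right 0]
          · have e : (x+1)%x = 1 := modRep (by omega : x+1 = x*1+1) (by omega)
            rw [e, W_one_left (x-1), show x-1+1 = x from by omega]
        rw [Nat.div_one, W_L2 (x+1+1) (x+1) (by omega) (by omega), e1, hg,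
          show x+1+1-(x+1) = 1 from by omega, show (x+1)-1 = x from by omega,
          W_one_left (x+1), W_one_left x,
          W_L2 (x+1) x (by omega) (by omega), hg2, hSL2,
          show (x+1)-x = 1 from by omega, W_one_left x,
          W_one_left 1, show (1:ℕ)+1 = 2 from rfl, qInt_two,
          qInt_succ (x+1), qInt_succ x]
        ring
      · -- y < b
        by_cases hy1 : y = 1
        · -- ===== T2c : y = 1 < b, a = b*x + 1 =====
          subst hy1
          rw [Nat.mul_one] at h
          have hz : (a:ℤ) = b*x+1 := by exact_mod_cast h
          have hbr : (x+1)*b = b*x + b := by ring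
          have hbr2 : (x+1)*(b+1) = b*x + b + x + 1 := by ring
          have hbr3 : x*(b+1) = b*x + x := by ring
          have hbr4 : x*b = b*x := by ring
          have hmodA : (a+b) % (x+1) = 1 := modRep (by omega : a+b = (x+1)*b + 1) (by omega)
          have hgA : (a+b+(x+1)-1)/(x+1) = b+1 :=
            divRep (by omega : a+b+(x+1)-1 = (x+1)*(b+1) + 0) (by omega)
          have hd2 : (a-x)*1 = (b-1)*x + 1 := by
            zify [le_of_lt hxa, hb]; linear_combination hz
          have ih2 := IH (a-x) x (b-1) 1 (by omega) hd2
          rw [Nat.div_one] at ih2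
          have hgx : (a+x-1)/x = b+1 := divRep (by omega : a+x-1 = x*(b+1) + 0) (by omega)
          have hSL4 : W (a%x) (x - a%x) = qInt x := by
            by_cases hx1 : x = 1
            · subst hx1; rw [Nat.mod_one, Nat.sub_zero, W_one_right 0]
            · have e : a % x = 1 := modRep (by omega : a = x*b + 1) (by omega)
              rw [e, W_one_left (x-1), show x-1+1 = x from by omega]
          rw [Nat.div_one, W_one_right b, W_L2 (a+b) (x+1) (by omega) (by omega), hmodA, hgA,
            show (a+b)-(x+1) = (a-x)+(b-1) from by omega,
            show (x+1)-1 = x from by omega, ih2,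
            W_one_right (b-1), show b-1+1 = b from by omega,
            W_one_left x,
            W_L2 a x (by omega) hxa, hgx, hSL4,
            qInt_succ x, qInt_succ b]
          ring
        · -- ===== T2a : 1 ≤ x < a, 2 ≤ y < b =====
          have hy2 : 2 ≤ y := by omega
          have hz : (a:ℤ)*y = b*x+1 := by exact_mod_cast h
          obtain ⟨m, rb, hbe, hrb1, hrb2, hma1, hma2⟩ := T2ceil h hx hy2
          -- sa, sb : the "ceiling residues"
          obtain ⟨sa, hsa⟩ : ∃ sa, a + sa = m*x + x := ⟨m*x + x - a, by omega⟩
          obtain ⟨sb, hsb⟩ : ∃ sb, sb + rb = y := ⟨y - rb, by omega⟩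
          have hsa2 : sa < x := by omega
          have hsb1 : 1 ≤ sb := by omega
          have hsb2 : sb < y := by omega
          have hzb : (y:ℤ)*m + rb = b := by exact_mod_cast hbe
          have hzsa : (a:ℤ) + sa = m*x + x := by exact_mod_cast hsa
          have hzsb : (sb:ℤ) + rb = y := by exact_mod_cast hsb
          -- determinant of the inner child
          have hxsb : x*sb = y*sa + 1 := by
            have : (x:ℤ)*sb = y*sa + 1 := by
              linear_combination hz + (x:ℤ)*hzsb - (y:ℤ)*hzsa - (x:ℤ)*hzb
            exact_mod_cast this
          have hd1 : (x-sa)*sb = (y-sb)*sa + 1 := by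
            have hzz : (x:ℤ)*sb = y*sa + 1 := by exact_mod_cast hxsb
            zify [le_of_lt hsa2, le_of_lt hsb2]
            linear_combination hzz
          have hd2 : (a-x)*y = (b-y)*x + 1 := by
            zify [le_of_lt hxa, le_of_lt hyb2]; linear_combination hz
          have ih1 := IH (x-sa) sa (y-sb) sb (by omega) hd1
          have ih2 := IH (a-x) x (b-y) y (by omega) hd2
          -- exponents
          have hE1 : (sa+sb)/sb = (x+y)/y := by
            rw [Nat.add_div_right _ (by omega : 0 < sb),
              Nat.add_div_right _ (by omega : 0 < y),
              keyD hxsb (by omega) (by omega), sub_one_div (ymodx h hy2)]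
          rw [hE1] at ih1
          -- div/mod bookkeeping
          have hbrA : (x+y)*m = m*x + y*m := by ring
          have hbrA2 : (x+y)*(m+1) = m*x + y*m + x + y := by ring
          have hmodA : (a+b) % (x+y) = (x-sa)+(y-sb) :=
            modRep (by omega : a+b = (x+y)*m + ((x-sa)+(y-sb))) (by omega)
          have hgA : (a+b+(x+y)-1)/(x+y) = m+1 :=
            divRep (by omega : a+b+(x+y)-1 = (x+y)*(m+1) + ((x-sa)+(y-sb)-1)) (by omega)
          have hbrx : x*m = m*x := by ring
          have hbrx2 : x*(m+1) = m*x + x := by ring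
          have hgx : (a+x-1)/x = m+1 :=
            divRep (by omega : a+x-1 = x*(m+1) + (x-sa-1)) (by omega)
          have hbry : y*(m+1) = y*m + y := by ring
          have hgy : (b+y-1)/y = m+1 :=
            divRep (by omega : b+y-1 = y*(m+1) + (y-sb-1)) (by omega)
          have hmodx : W (a%x) (x - a%x) = W (x-sa) sa := by
            by_cases hsa0 : sa = 0
            · -- then x ∣ a, so x = 1
              have hx1 : x = 1 := by
                have hax : a = m*x + x := by omega
                have hzax : (a:ℤ) = m*x + x := by exact_mod_cast hax
                have e2 : (x:ℤ)*((m+1)*y - b) = 1 := by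
                  linear_combination hz - (y:ℤ)*hzax
                have hxdvd : (x:ℤ) ∣ 1 := ⟨(m+1)*y - b, e2.symm⟩
                have := Int.le_of_dvd one_pos hxdvd
                omega
              subst hx1
              rw [Nat.mod_one, Nat.sub_zero, show sa = 0 from hsa0,
                show (1:ℕ) - 0 = 1 from rfl, W_one_right 0, W_one_left 0]
            · have e : a % x = x - sa := modRep (by omega : a = x*m + (x-sa)) (by omega)
              rw [e, show x - (x-sa) = sa from by omega]
          have hmody : b % y = y - sb := modRep (by omega : b = y*m + (y-sb)) (by omega)
          rw [W_L2 (a+b) (x+y) (by omega) (by omega), hmodA, hgA,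
            show (a+b)-(x+y) = (a-x)+(b-y) from by omega,
            show (x+y) - ((x-sa)+(y-sb)) = sa+sb from by omega,
            ih1, ih2,
            W_L2 a x (by omega) hxa, hgx, hmodx,
            W_L2 b y (by omega) hyb2, hgy, hmody,
            show y - (y-sb) = sb from by omega]
          ring
    · -- ===== B1 : x = a, forces a = x = 1, y = b + 1 =====
      subst hxa
      have hay : x*b < x*y := by
        have br : x*y = y*x := by ring
        have br2 : x*b = b*x := by ring
        omega
      have e2 : x*(y-b) = 1 := by
        have := Nat.mul_sub x y b
        have br : x*y = y*x := by ring
        have br2 : x*b = b*x := by ring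
        omega
      have ha1 : x = 1 := by
        have := Nat.le_of_dvd one_pos ⟨y-b, e2.symm⟩; omega
      subst ha1
      have hyb : y = b+1 := by
        rw [Nat.one_mul, Nat.mul_one] at h; omega
      subst hyb
      have hE : (1+(b+1))/(b+1) = 1 := divRep (by omega : 1+(b+1) = (b+1)*1 + 1) (by omega)
      have e1 : ((b+1)+1) % (b+1) = 1 := modRep (by omega : (b+1)+1 = (b+1)*1 + 1) (by omega)
      have hSL1 : W (b - (b+1)%b) ((b+1)%b) = qInt b := by
        by_cases hb1 : b = 1
        · subst hb1; norm_num
          rw [W_one_left 0]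
        · have e : (b+1)%b = 1 := modRep (by omega : b+1 = b*1+1) (by omega)
          rw [e, W_one_right (b-1), show b-1+1 = b from by omega]
      rw [hE, show 1+b = b+1 from by omega, show 1+(b+1) = (b+1)+1 from by omega,
        W_L1 (b+1) ((b+1)+1) (by omega) (by omega), e1,
        show (b+1) - 1 = b from by omega, show (b+1)+1 - (b+1) = 1 from by omega,
        W_one_right (b+1),
        W_L1 b (b+1) (by omega) (by omega), hSL1,
        show (b+1) - b = 1 from by omega, W_one_right b,
        W_one_left 1, show (1:ℕ)+1 = 2 from rfl, qInt_two,
        qInt_succ' (b+1), qInt_succ' b]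
      ring
    · -- ===== a < x : left-heavy side =====
      have hby : b < y := by
        have e3 : b*(a+1) ≤ b*x := Nat.mul_le_mul_left b (by omega)
        have br : b*(a+1) = a*b + b := by ring
        have key : a*b < a*y := by omega
        exact Nat.lt_of_mul_lt_mul_left key
      have hz : (a:ℤ)*y = b*x+1 := by exact_mod_cast h
      by_cases hb1 : b = 1
      · -- ===== T1c : b = 1, a*y = x+1 =====
        subst hb1
        rw [Nat.one_mul] at h
        have hz : (a:ℤ)*y = x+1 := by exact_mod_cast h
        have hy2 : 2 ≤ y := by omega
        have hrep1 : x + y = (a+1)*(y-1) + a := by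
          zify [hy]; linear_combination -hz
        have hrep2 : x + y = y*a + (y-1) := by
          zify [hy]; linear_combination -hz
        have hE : (x+y)/y = a := divRep hrep2 (by omega)
        have hmod : (x+y) % (a+1) = a := modRep hrep1 (by omega)
        have hrepx : x = a*(y-1) + (a-1) := by
          zify [hy, ha]; linear_combination -hz
        have hmodx : x % a = a - 1 := modRep hrepx (by omega)
        have hd2 : a*(y-1) = 1*(x-a) + 1 := by
          zify [le_of_lt hxa, hy]; linear_combination hz
        have ih2 := IH a (x-a) 1 (y-1) (by omega) hd2
        have hE2 : ((x-a)+(y-1))/(y-1) = a := by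
          rw [Nat.add_div_right _ (by omega : 0 < y-1), keyD hd2 le_rfl (by omega), Nat.div_one]
          omega
        rw [hE2] at ih2
        rw [hE, W_L1 (a+1) (x+y) (by omega) (by omega), hmod,
          show a+1-a = 1 from by omega,
          show x+y-(a+1) = (x-a)+(y-1) from by omega,
          ih2,
          W_L1 a x ha hxa, hmodx,
          show a-(a-1) = 1 from by omega,
          W_one_left y, W_one_left a, W_one_left (a-1), W_one_left (y-1),
          show a-1+1 = a from by omega, show y-1+1 = y from by omega,
          qInt_succ a, qInt_succ' y]
        ring
      · -- ===== T1a : a < x, b ≥ 2, b < y =====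
        have hb2 : 2 ≤ b := by omega
        obtain ⟨f, ra, rb, hxe, hye, hra, hrb, hrb1⟩ := T1floor h ha hb2
        have hzx : (a:ℤ)*f + ra = x := by exact_mod_cast hxe
        have hzy : (b:ℤ)*f + rb = y := by exact_mod_cast hye
        have h1 : a*rb = b*ra + 1 := by
          have : (a:ℤ)*rb = b*ra + 1 := by
            linear_combination hz + (a:ℤ)*hzy - (b:ℤ)*hzx
          exact_mod_cast this
        have hd1 : (a-ra)*rb = (b-rb)*ra + 1 := by
          have hzz : (a:ℤ)*rb = b*ra + 1 := by exact_mod_cast h1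
          zify [le_of_lt hra, le_of_lt hrb]
          linear_combination hzz
        have hd2 : a*(y-b) = b*(x-a) + 1 := by
          zify [le_of_lt hxa, le_of_lt hby]; linear_combination hz
        have ih1 := IH (a-ra) ra (b-rb) rb (by omega) hd1
        have ih2 := IH a (x-a) b (y-b) (by omega) hd2
        have hE1 : (ra+rb)/rb = (x+y)/y := by
          rw [Nat.add_div_right _ (by omega : 0 < rb),
            Nat.add_div_right _ (by omega : 0 < y),
            keyD h1 hb (by omega), keyD h hb hy]
        have hE2 : ((x-a)+(y-b))/(y-b) = (x+y)/y := by
          rw [Nat.add_div_right _ (by omega : 0 < y-b),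
            Nat.add_div_right _ (by omega : 0 < y),
            keyD hd2 hb (by omega), keyD h hb hy]
        rw [hE1] at ih1
        rw [hE2] at ih2
        have hbrf : (a+b)*f = a*f + b*f := by ring
        have hmodA : (x+y) % (a+b) = ra + rb :=
          modRep (by omega : x+y = (a+b)*f + (ra+rb)) (by omega)
        have hmodx : x % a = ra := modRep (by omega : x = a*f + ra) hra
        have hmody : y % b = rb := modRep (by omega : y = b*f + rb) hrb
        rw [W_L1 (a+b) (x+y) (by omega) (by omega), hmodA,
          show (a+b)-(ra+rb) = (a-ra)+(b-rb) from by omega,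
          show (x+y)-(a+b) = (x-a)+(y-b) from by omega,
          ih1, ih2,
          W_L1 a x ha hxa, hmodx,
          W_L1 b y hb hby, hmody]
        ring


/-- For Farey neighbors `x/a`, `y/b ≥ 1` (`ay - bx = 1`):
`(a+b, x+y)_q = (a, x)_q + q^{⌈x/y⌉}·(b, y)_q` (here `⌈x/y⌉ = (x + y - 1)/y`). -/
theorem W_farey_sum (a x b y : ℕ)
    (ha : 1 ≤ a) (hax : a ≤ x) (hb : 1 ≤ b) (hby : b ≤ y)
    (h : a * y = b * x + 1) :
    W (a + b) (x + y) = W a x + X ^ ((x + y - 1) / y) * W b y := by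
  have hy : 1 ≤ y := by omega
  have hy2 : 2 ≤ y := by
    by_contra hc
    push_neg at hc
    have hy1 : y = 1 := by omega
    subst hy1
    have hb1 : b = 1 := by omega
    subst hb1
    rw [Nat.mul_one, Nat.one_mul] at h
    omega
  have hmx := ymodx h hy2
  have key : (x+y-1)/y = (x+y)/y := by
    have hm := Nat.div_add_mod x y
    have hl := Nat.mod_lt x (show 0 < y by omega)
    have br : y*(x/y+1) = y*(x/y) + y := by ring
    have e1 : (x+y)/y = x/y + 1 := Nat.add_div_right x (by omega)
    have e2 : (x+y-1)/y = x/y + 1 :=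
      divRep (by omega : x+y-1 = y*(x/y+1) + (x%y - 1)) (by omega)
    omega
  rw [key]
  exact Gaux (a+x+b+y) a x b y le_rfl h
end
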